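/- Let n ≥ 3 be odd and let P_n be the path graph on vertices 1,…,n with edges {i,i+1}. Then Σ_{σ ∈ Aut(P_n)} Σ_{μ matching of P_n with σ(μ)=μ} w^μ(σ) = a_1^n·U_n(b_1,β_1) + a_1·a_2^{(n−1)/2}·β_2·U_{(n−1)/2}(b_2,β_2), where U_m(Y,Z) evaluated at ring elements Y, Z denotes Σ_{μ matching of P_m} Y^{|μ|} Z^{(m−1)−|μ|}. -/
import Mathlib


open scoped Classical

noncomputable section

/-- Variables of the extended Walsh cycle index ring:
`a k`, `b k`, `c k`, `β k`, `γ k` for `k ≥ 1`. -/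
inductive WVar : Type
  | a : ℕ → WVar
  | b : ℕ → WVar
  | c : ℕ → WVar
  | beta : ℕ → WVar
  | gamma : ℕ → WVar

/-- The extended Walsh cycle index ring `ℚ[a;b;c;β;γ]`. -/
abbrev WRing : Type := MvPolynomial WVar ℚ

/-- The variable `a_k`. -/
def va (k : ℕ) : WRing := MvPolynomial.X (WVar.a k)
/-- The variable `b_k`. -/
def vb (k : ℕ) : WRing := MvPolynomial.X (WVar.b k)
/-- The variable `c_k`. -/
def vc (k : ℕ) : WRing := MvPolynomial.X (WVar.c k)
/-- The variable `β_k`. -/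
def vbeta (k : ℕ) : WRing := MvPolynomial.X (WVar.beta k)
/-- The variable `γ_k`. -/
def vgamma (k : ℕ) : WRing := MvPolynomial.X (WVar.gamma k)

/-- The path graph `P_n` on `Fin n`, edges `{i, i+1}`. -/
def pathG (n : ℕ) : SimpleGraph (Fin n) :=
  SimpleGraph.fromRel (fun i j => (i : ℕ) + 1 = (j : ℕ))

/-- The cycle graph `C_n` on `Fin n`, edges `{i, i+1 mod n}`. -/
def cycG (n : ℕ) : SimpleGraph (Fin n) :=
  SimpleGraph.fromRel (fun i j => ((i : ℕ) + 1) % n = (j : ℕ))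

/-- The matchings of a graph `G`: finsets of pairwise disjoint edges of `G`. -/
def matchings {V : Type*} [Fintype V] (G : SimpleGraph V) : Finset (Finset (Sym2 V)) :=
  Finset.univ.filter (fun μ =>
    (↑μ : Set (Sym2 V)) ⊆ G.edgeSet ∧
    ∀ e ∈ μ, ∀ f ∈ μ, e ≠ f → ∀ v : V, v ∈ e → v ∉ f)

/-- `U_m(Y,Z) = Σ_{μ matching of P_m} Y^{|μ|} Z^{(m-1)-|μ|}`. -/
def Upoly {S : Type*} [CommSemiring S] (m : ℕ) (Y Z : S) : S :=
  ∑ μ ∈ matchings (pathG m), Y ^ μ.card * Z ^ ((m - 1) - μ.card)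

/-- `T_m(Y,Z) = Σ_{μ matching of C_m} Y^{|μ|} Z^{m-|μ|}` for `m ≥ 3`, with the
conventions `T_1(Y,Z) = Z` and `T_2(Y,Z) = 2YZ + Z²`. -/
def Tpoly {S : Type*} [CommSemiring S] (m : ℕ) (Y Z : S) : S :=
  if m = 1 then Z
  else if m = 2 then 2 * Y * Z + Z ^ 2
  else ∑ μ ∈ matchings (cycG m), Y ^ μ.card * Z ^ (m - μ.card)

/-- The permutation induced by `σ` on unordered pairs. -/
def edgePerm {V : Type*} (σ : Equiv.Perm V) : Equiv.Perm (Sym2 V) where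
  toFun := Sym2.map σ
  invFun := Sym2.map σ.symm
  left_inv := by intro e; induction e using Sym2.ind with | _ x y => simp
  right_inv := by intro e; induction e using Sym2.ind with | _ x y => simp

/-- The size of the cycle (orbit) of `σ` through the vertex `v`. -/
def orbSize {V : Type*} [Fintype V] (σ : Equiv.Perm V) (v : V) : ℕ :=
  (Finset.univ.filter fun u => σ.SameCycle v u).card

/-- `σ_k`: the number of `k`-cycles of `σ` on the vertices. -/
def vcyc {V : Type*} [Fintype V] (σ : Equiv.Perm V) (k : ℕ) : ℕ :=
  (Finset.univ.filter fun v => orbSize σ v = k).card / k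

/-- The length of the cycle of the induced edge permutation through `e`. -/
def eOrbLen {V : Type*} [Fintype V] (σ : Equiv.Perm V) (e : Sym2 V) : ℕ :=
  (Finset.univ.filter fun f => (edgePerm σ).SameCycle e f).card

/-- The edge cycle through `e` (of length `l = eOrbLen σ e`) is cylindrical:
`σ^l` fixes both endpoints of every edge of the cycle. -/
def IsCylE {V : Type*} [Fintype V] (σ : Equiv.Perm V) (e : Sym2 V) : Prop :=
  ∀ f : Sym2 V, (edgePerm σ).SameCycle e f → ∀ u v : V, f = s(u, v) →
    (σ ^ eOrbLen σ e) u = u ∧ (σ ^ eOrbLen σ e) v = v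

/-- The edge cycle through `e` (of length `l = eOrbLen σ e`) is Möbius:
`σ^l` exchanges the endpoints of every edge of the cycle. -/
def IsMobE {V : Type*} [Fintype V] (σ : Equiv.Perm V) (e : Sym2 V) : Prop :=
  ∀ f : Sym2 V, (edgePerm σ).SameCycle e f → ∀ u v : V, f = s(u, v) →
    u ≠ v ∧ (σ ^ eOrbLen σ e) u = v ∧ (σ ^ eOrbLen σ e) v = u

/-- The edge set of `G` as a finset. -/
def eFin {V : Type*} [Fintype V] (G : SimpleGraph V) : Finset (Sym2 V) :=
  G.edgeFinset

/-- `cyl_{k,Y}(σ)`: the number of cylindrical edge cycles of length `k` of sort `Y`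
(consisting of edges of the matching `μ`). -/
def cylCntY {V : Type*} [Fintype V] (G : SimpleGraph V) (μ : Finset (Sym2 V))
    (σ : Equiv.Perm V) (k : ℕ) : ℕ :=
  ((eFin G).filter fun e => e ∈ μ ∧ eOrbLen σ e = k ∧ IsCylE σ e).card / k

/-- `möb_{k,Y}(σ)`: the number of Möbius edge cycles of length `k` of sort `Y`. -/
def mobCntY {V : Type*} [Fintype V] (G : SimpleGraph V) (μ : Finset (Sym2 V))
    (σ : Equiv.Perm V) (k : ℕ) : ℕ :=
  ((eFin G).filter fun e => e ∈ μ ∧ eOrbLen σ e = k ∧ IsMobE σ e).card / k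

/-- `cyl_{k,Z}(σ)`: the number of cylindrical edge cycles of length `k` of sort `Z`
(consisting of edges not in the matching `μ`). -/
def cylCntZ {V : Type*} [Fintype V] (G : SimpleGraph V) (μ : Finset (Sym2 V))
    (σ : Equiv.Perm V) (k : ℕ) : ℕ :=
  ((eFin G).filter fun e => e ∉ μ ∧ eOrbLen σ e = k ∧ IsCylE σ e).card / k

/-- `möb_{k,Z}(σ)`: the number of Möbius edge cycles of length `k` of sort `Z`. -/
def mobCntZ {V : Type*} [Fintype V] (G : SimpleGraph V) (μ : Finset (Sym2 V))
    (σ : Equiv.Perm V) (k : ℕ) : ℕ :=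
  ((eFin G).filter fun e => e ∉ μ ∧ eOrbLen σ e = k ∧ IsMobE σ e).card / k

/-- The extended cycle index monomial `w^μ(σ)` of a matched graph `(G,μ)` with an
automorphism `σ` fixing `μ`. -/
def wM {V : Type*} [Fintype V] (G : SimpleGraph V) (μ : Finset (Sym2 V))
    (σ : Equiv.Perm V) : WRing :=
  (∏ k ∈ Finset.range (Fintype.card V * Fintype.card V + 2), va k ^ vcyc σ k) *
  (∏ k ∈ Finset.range (Fintype.card V * Fintype.card V + 2), vb k ^ cylCntY G μ σ k) *
  (∏ k ∈ Finset.range (Fintype.card V * Fintype.card V + 2), vc k ^ mobCntY G μ σ k) *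
  (∏ k ∈ Finset.range (Fintype.card V * Fintype.card V + 2), vbeta k ^ cylCntZ G μ σ k) *
  (∏ k ∈ Finset.range (Fintype.card V * Fintype.card V + 2), vgamma k ^ mobCntZ G μ σ k)

/-- The automorphisms of `G`, as a finset of permutations of the vertices. -/
def autF {V : Type*} [Fintype V] (G : SimpleGraph V) : Finset (Equiv.Perm V) :=
  Finset.univ.filter fun σ => ∀ u v : V, G.Adj (σ u) (σ v) ↔ G.Adj u v

/-- The matchings of `G` fixed by the automorphism `σ` (i.e. `σ(μ) = μ`). -/
def fixedMatchings {V : Type*} [Fintype V] (G : SimpleGraph V) (σ : Equiv.Perm V) :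
    Finset (Finset (Sym2 V)) :=
  (matchings G).filter fun μ => μ.image (Sym2.map σ) = μ

section Basics

lemma pathG_adj {n : ℕ} {u v : Fin n} :
    (pathG n).Adj u v ↔ ((u : ℕ) + 1 = v ∨ (v : ℕ) + 1 = u) := by
  simp only [pathG, SimpleGraph.fromRel_adj]
  constructor
  · rintro ⟨-, h⟩; exact h
  · intro h
    refine ⟨fun he => ?_, h⟩
    subst he; omega

lemma mem_pathG_edgeSet {n : ℕ} {e : Sym2 (Fin n)} :
    e ∈ (pathG n).edgeSet ↔ ∃ u v : Fin n, e = s(u, v) ∧ (u : ℕ) + 1 = (v : ℕ) := by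
  induction e using Sym2.ind with
  | _ x y =>
    rw [SimpleGraph.mem_edgeSet, pathG_adj]
    constructor
    · rintro (h | h)
      · exact ⟨x, y, rfl, h⟩
      · exact ⟨y, x, Sym2.eq_swap, h⟩
    · rintro ⟨u, v, huv, h⟩
      rw [Sym2.eq_iff] at huv
      rcases huv with ⟨rfl, rfl⟩ | ⟨rfl, rfl⟩
      · exact Or.inl h
      · exact Or.inr h

lemma revPerm_mem_autF {n : ℕ} : (Fin.revPerm : Equiv.Perm (Fin n)) ∈ autF (pathG n) := by
  simp only [autF, Finset.mem_filter, Finset.mem_univ, true_and]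
  intro u v
  rw [pathG_adj, pathG_adj]
  simp only [Fin.revPerm_apply, Fin.val_rev]
  have hu := u.isLt; have hv := v.isLt
  omega

lemma one_mem_autF {n : ℕ} : (1 : Equiv.Perm (Fin n)) ∈ autF (pathG n) := by
  simp [autF]

lemma revPerm_sq {n : ℕ} : (Fin.revPerm : Equiv.Perm (Fin n)) ^ 2 = 1 := by
  ext v
  simp [sq, Fin.rev_rev]

end Basics
section Classification

lemma autF_adj_iff {n : ℕ} {σ : Equiv.Perm (Fin n)} (hσ : σ ∈ autF (pathG n))
    {u v : Fin n} : (pathG n).Adj (σ u) (σ v) ↔ (pathG n).Adj u v := by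
  simp only [autF, Finset.mem_filter, Finset.mem_univ, true_and] at hσ
  exact hσ u v

lemma autF_classify {n : ℕ} (hn : 2 ≤ n) {σ : Equiv.Perm (Fin n)}
    (hσ : σ ∈ autF (pathG n)) : σ = 1 ∨ σ = Fin.revPerm := by
  have vval : ∀ (i j : ℕ) (hi : i < n) (hj : j < n), i = j →
      ((σ ⟨i, hi⟩ : Fin n) : ℕ) = ((σ ⟨j, hj⟩ : Fin n) : ℕ) := by
    rintro i j hi hj rfl; rfl
  have hstep : ∀ i : ℕ, ∀ h1 : i + 1 < n,
      ((σ ⟨i, by omega⟩ : Fin n) : ℕ) + 1 = (σ ⟨i + 1, h1⟩ : ℕ) ∨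
      ((σ ⟨i + 1, h1⟩ : Fin n) : ℕ) + 1 = (σ ⟨i, by omega⟩ : ℕ) := by
    intro i h1
    have : (pathG n).Adj (σ ⟨i, by omega⟩) (σ ⟨i+1, h1⟩) := by
      rw [autF_adj_iff hσ, pathG_adj]; left; rfl
    rwa [pathG_adj] at this
  have hinj : ∀ (i j : ℕ) (hi : i < n) (hj : j < n),
      ((σ ⟨i, hi⟩ : Fin n) : ℕ) = ((σ ⟨j, hj⟩ : Fin n) : ℕ) → i = j := by
    intro i j hi hj h
    have : σ ⟨i, hi⟩ = σ ⟨j, hj⟩ := Fin.ext h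
    have := σ.injective this
    simpa using this
  rcases hstep 0 (by omega) with hA | hB
  · -- increasing: σ i = σ 0 + i
    left
    have key : ∀ i : ℕ, ∀ h : i < n, ((σ ⟨i, h⟩ : Fin n) : ℕ) = (σ ⟨0, by omega⟩ : ℕ) + i := by
      intro i
      induction i using Nat.strong_induction_on with
      | _ i ih =>
        match i with
        | 0 => intro h; simp
        | 1 =>
          intro h
          have b1 := vval (0+1) 1 (by omega) h rfl
          omega
        | (i+2) =>
          intro h
          have e1 := ih (i+1) (by omega) (by omega)
          have e0 := ih i (by omega) (by omega)
          have b2 := vval (i+1+1) (i+2) (by omega) h rfl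
          rcases hstep (i+1) h with h2 | h2
          · omega
          · exfalso
            have := hinj (i+2) i h (by omega) (by omega)
            omega
    have hzero : (σ ⟨0, by omega⟩ : ℕ) = 0 := by
      have h1 := key (n-1) (by omega)
      have h2 := (σ ⟨n-1, by omega⟩).isLt
      omega
    ext v
    have hv := v.isLt
    have h1 := key (v : ℕ) hv
    have h2 : (⟨(v : ℕ), hv⟩ : Fin n) = v := rfl
    rw [h2] at h1
    simp only [Equiv.Perm.coe_one, id_eq]
    omega
  · -- decreasing
    right
    have key : ∀ i : ℕ, ∀ h : i < n, ((σ ⟨i, h⟩ : Fin n) : ℕ) + i = (σ ⟨0, by omega⟩ : ℕ) := by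
      intro i
      induction i using Nat.strong_induction_on with
      | _ i ih =>
        match i with
        | 0 => intro h; simp
        | 1 =>
          intro h
          have b1 := vval (0+1) 1 (by omega) h rfl
          omega
        | (i+2) =>
          intro h
          have e1 := ih (i+1) (by omega) (by omega)
          have e0 := ih i (by omega) (by omega)
          have b2 := vval (i+1+1) (i+2) (by omega) h rfl
          rcases hstep (i+1) h with h2 | h2
          · exfalso
            have := hinj (i+2) i h (by omega) (by omega)
            omega
          · omega
    have hzero : (σ ⟨0, by omega⟩ : ℕ) = n - 1 := by
      have h1 := key (n-1) (by omega)
      have h2 := (σ ⟨0, by omega⟩).isLt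
      omega
    ext v
    have hv := v.isLt
    have h1 := key (v : ℕ) hv
    have h2 : (⟨(v : ℕ), hv⟩ : Fin n) = v := rfl
    rw [h2] at h1
    rw [Fin.revPerm_apply, Fin.val_rev]
    omega

lemma one_ne_revPerm {n : ℕ} (hn : 2 ≤ n) :
    (1 : Equiv.Perm (Fin n)) ≠ Fin.revPerm := by
  intro h
  have := congrArg (fun σ : Equiv.Perm (Fin n) => ((σ ⟨0, by omega⟩ : Fin n) : ℕ)) h
  simp only [Equiv.Perm.coe_one, id, Fin.revPerm_apply, Fin.val_rev] at this
  omega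

lemma autF_pathG_eq {n : ℕ} (hn : 2 ≤ n) :
    autF (pathG n) = {1, Fin.revPerm} := by
  ext σ
  simp only [Finset.mem_insert, Finset.mem_singleton]
  constructor
  · exact fun h => autF_classify hn h
  · rintro (rfl | rfl)
    · exact one_mem_autF
    · exact revPerm_mem_autF

end Classification
section Orbits

lemma zpow_of_sq_one {α : Type*} (π : Equiv.Perm α) (h : π ^ 2 = 1) (i : ℤ) :
    π ^ i = 1 ∨ π ^ i = π := by
  rcases Int.even_or_odd i with ⟨k, hk⟩ | ⟨k, hk⟩
  · left
    have : i = 2 * k := by omega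
    rw [this, zpow_mul]
    norm_cast
    rw [h, one_zpow]
  · right
    rw [hk, zpow_add, zpow_mul, zpow_one]
    norm_cast
    rw [h, one_zpow, one_mul]

lemma sameCycle_of_sq_one {α : Type*} {π : Equiv.Perm α} (h : π ^ 2 = 1) {e f : α} :
    π.SameCycle e f ↔ f = e ∨ f = π e := by
  constructor
  · rintro ⟨i, rfl⟩
    rcases zpow_of_sq_one π h i with h1 | h1 <;> rw [h1] <;> simp
  · rintro (rfl | rfl)
    · exact ⟨0, by simp⟩
    · exact ⟨1, by simp⟩

lemma sameCycle_one {α : Type*} {e f : α} :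
    (1 : Equiv.Perm α).SameCycle e f ↔ f = e := by
  constructor
  · rintro ⟨i, rfl⟩; simp
  · rintro rfl; exact ⟨0, by simp⟩

lemma orbSize_fixed {V : Type*} [Fintype V] {σ : Equiv.Perm V} {v : V}
    (h : σ v = v) : orbSize σ v = 1 := by
  rw [orbSize]
  refine Finset.card_eq_one.mpr ⟨v, ?_⟩
  ext u
  simp only [Finset.mem_filter, Finset.mem_univ, true_and, Finset.mem_singleton]
  constructor
  · rintro ⟨i, rfl⟩
    rw [Equiv.Perm.zpow_apply_eq_self_of_apply_eq_self h]
  · rintro rfl; exact ⟨0, by simp⟩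

lemma orbSize_invol_two {V : Type*} [Fintype V] {σ : Equiv.Perm V}
    (hsq : σ ^ 2 = 1) {v : V} (h : σ v ≠ v) : orbSize σ v = 2 := by
  rw [orbSize]
  refine Finset.card_eq_two.mpr ⟨v, σ v, fun hh => h hh.symm, ?_⟩
  ext u
  simp only [Finset.mem_filter, Finset.mem_univ, true_and, Finset.mem_insert,
    Finset.mem_singleton]
  rw [sameCycle_of_sq_one hsq]

lemma edgePerm_one {V : Type*} : edgePerm (1 : Equiv.Perm V) = 1 := by
  ext e
  induction e using Sym2.ind with
  | _ x y => simp [edgePerm]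

lemma edgePerm_sq_one {V : Type*} {σ : Equiv.Perm V} (h : σ ^ 2 = 1) :
    edgePerm σ ^ 2 = 1 := by
  ext e
  induction e using Sym2.ind with
  | _ x y =>
    have h1 : σ (σ x) = x := by
      have := Equiv.Perm.ext_iff.mp h x
      simpa [sq, Equiv.Perm.mul_apply] using this
    have h2 : σ (σ y) = y := by
      have := Equiv.Perm.ext_iff.mp h y
      simpa [sq, Equiv.Perm.mul_apply] using this
    simp [sq, edgePerm, h1, h2]

lemma eOrbLen_one {V : Type*} [Fintype V] (e : Sym2 V) :
    eOrbLen (1 : Equiv.Perm V) e = 1 := by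
  rw [eOrbLen]
  refine Finset.card_eq_one.mpr ⟨e, ?_⟩
  ext f
  simp only [Finset.mem_filter, Finset.mem_univ, true_and, Finset.mem_singleton]
  rw [edgePerm_one, sameCycle_one]

lemma eOrbLen_invol {V : Type*} [Fintype V] {σ : Equiv.Perm V}
    (hsq : σ ^ 2 = 1) {e : Sym2 V} (h : edgePerm σ e ≠ e) : eOrbLen σ e = 2 := by
  have hsq' := edgePerm_sq_one (V := V) (σ := σ) hsq
  rw [eOrbLen]
  refine Finset.card_eq_two.mpr ⟨e, edgePerm σ e, fun hh => h hh.symm, ?_⟩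
  ext f
  simp only [Finset.mem_filter, Finset.mem_univ, true_and, Finset.mem_insert,
    Finset.mem_singleton]
  rw [sameCycle_of_sq_one hsq']

lemma isCylE_of_pow_eq_one {V : Type*} [Fintype V] {σ : Equiv.Perm V} {e : Sym2 V}
    (h : σ ^ (eOrbLen σ e) = 1) : IsCylE σ e := by
  intro f _ u v _
  rw [h]; simp

lemma not_isMobE_of_pow_eq_one {V : Type*} [Fintype V] {G : SimpleGraph V} {σ : Equiv.Perm V}
    {e : Sym2 V} (h : σ ^ (eOrbLen σ e) = 1) (he : e ∈ G.edgeSet) : ¬ IsMobE σ e := by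
  intro hm
  induction e using Sym2.ind with
  | _ x y =>
    have hadj : G.Adj x y := he
    obtain ⟨hne, h1, -⟩ := hm s(x, y) (Equiv.Perm.SameCycle.refl _ _) x y rfl
    rw [h] at h1
    exact hne (by simpa using h1)

end Orbits

section ProdHelpers

lemma prod_pow_single (X : ℕ → WRing) (c : ℕ → ℕ) (N k0 : ℕ) (hk : k0 < N)
    (h : ∀ k, k ≠ k0 → c k = 0) :
    ∏ k ∈ Finset.range N, X k ^ c k = X k0 ^ c k0 := by
  have hsub : {k0} ⊆ Finset.range N := by simp [hk]
  rw [← Finset.prod_subset hsub (fun x _ hnx => by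
    rw [h x (by simpa using hnx), pow_zero])]
  simp

lemma prod_pow_pair (X : ℕ → WRing) (c : ℕ → ℕ) (N k0 k1 : ℕ) (hk0 : k0 < N)
    (hk1 : k1 < N) (hne : k0 ≠ k1) (h : ∀ k, k ≠ k0 → k ≠ k1 → c k = 0) :
    ∏ k ∈ Finset.range N, X k ^ c k = X k0 ^ c k0 * X k1 ^ c k1 := by
  have hsub : ({k0, k1} : Finset ℕ) ⊆ Finset.range N := by
    intro x hx
    simp only [Finset.mem_insert, Finset.mem_singleton] at hx
    rcases hx with rfl | rfl <;> simp [hk0, hk1]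
  rw [← Finset.prod_subset hsub (fun x _ hnx => by
    simp only [Finset.mem_insert, Finset.mem_singleton, not_or] at hnx
    rw [h x hnx.1 hnx.2, pow_zero])]
  rw [Finset.prod_insert (by simpa using hne), Finset.prod_singleton]

end ProdHelpers
section MatchingBasics

lemma card_filter_div_eq_zero {α : Type*} {p : α → Prop} [DecidablePred p] (s : Finset α)
    (hp : ∀ e ∈ s, ¬ p e) (k : ℕ) : (s.filter p).card / k = 0 := by
  rw [Finset.filter_false_of_mem hp]
  simp

lemma mem_matchings {V : Type*} [Fintype V] {G : SimpleGraph V} {μ : Finset (Sym2 V)} :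
    μ ∈ matchings G ↔ (∀ e ∈ μ, e ∈ G.edgeSet) ∧
      ∀ e ∈ μ, ∀ f ∈ μ, e ≠ f → ∀ v, v ∈ e → v ∉ f := by
  rw [matchings, Finset.mem_filter]
  simp only [Finset.mem_univ, true_and]
  constructor
  · rintro ⟨h1, h2⟩; exact ⟨fun e he => h1 he, h2⟩
  · rintro ⟨h1, h2⟩; exact ⟨fun e he => h1 e he, h2⟩

lemma matchings_subset {V : Type*} [Fintype V] {G : SimpleGraph V} {μ : Finset (Sym2 V)}
    (h : μ ∈ matchings G) : ∀ e ∈ μ, e ∈ G.edgeSet := (mem_matchings.mp h).1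

lemma matchings_subset_eFin {V : Type*} [Fintype V] {G : SimpleGraph V} {μ : Finset (Sym2 V)}
    (h : μ ∈ matchings G) : μ ⊆ eFin G := by
  intro e he
  rw [eFin, SimpleGraph.mem_edgeFinset]
  exact matchings_subset h e he

lemma matchings_disj {V : Type*} [Fintype V] {G : SimpleGraph V} {μ : Finset (Sym2 V)}
    (h : μ ∈ matchings G) : ∀ e ∈ μ, ∀ f ∈ μ, e ≠ f → ∀ v, v ∈ e → v ∉ f :=
  (mem_matchings.mp h).2

lemma card_eFin_pathG (n : ℕ) : (eFin (pathG n)).card = n - 1 := by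
  rw [eFin, ← Finset.card_range (n - 1)]
  symm
  apply Finset.card_bij (fun (a : ℕ) (ha : a ∈ Finset.range (n - 1)) =>
    s((⟨a, by have := Finset.mem_range.mp ha; omega⟩ : Fin n),
      (⟨a + 1, by have := Finset.mem_range.mp ha; omega⟩ : Fin n)))
  · intro a ha
    rw [SimpleGraph.mem_edgeFinset, mem_pathG_edgeSet]
    exact ⟨_, _, rfl, rfl⟩
  · intro a ha b hb h
    rw [Sym2.eq_iff] at h
    rcases h with ⟨h1, -⟩ | ⟨h1, h2⟩
    · exact congrArg Fin.val h1
    · have := congrArg Fin.val h1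
      have := congrArg Fin.val h2
      simp only at *
      omega
  · intro e he
    rw [SimpleGraph.mem_edgeFinset, mem_pathG_edgeSet] at he
    obtain ⟨u, v, rfl, huv⟩ := he
    have hv := v.isLt
    refine ⟨(u : ℕ), Finset.mem_range.mpr (by omega), ?_⟩
    rw [Sym2.eq_iff]
    exact Or.inl ⟨Fin.ext rfl, Fin.ext huv⟩

end MatchingBasics

section IdentityCase

lemma orbSize_one {V : Type*} [Fintype V] (v : V) : orbSize (1 : Equiv.Perm V) v = 1 :=
  orbSize_fixed rfl

lemma vcyc_one_main {V : Type*} [Fintype V] : vcyc (1 : Equiv.Perm V) 1 = Fintype.card V := by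
  simp [vcyc, orbSize_one]

lemma vcyc_one_ne {V : Type*} [Fintype V] {k : ℕ} (hk : k ≠ 1) :
    vcyc (1 : Equiv.Perm V) k = 0 := by
  simp [vcyc, orbSize_one, hk, Ne.symm hk]

lemma cylCntY_one_eq {n : ℕ} {μ : Finset (Sym2 (Fin n))} (hμ : μ ∈ matchings (pathG n)) :
    cylCntY (pathG n) μ 1 1 = μ.card := by
  rw [cylCntY, Nat.div_one]
  refine congrArg Finset.card ?_
  ext e
  simp only [Finset.mem_filter, eFin, SimpleGraph.mem_edgeFinset]
  constructor
  · rintro ⟨-, h, -⟩; exact h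
  · intro h
    exact ⟨matchings_subset hμ e h, h, eOrbLen_one e,
      isCylE_of_pow_eq_one (one_pow _)⟩

lemma cylCntY_one_ne {n : ℕ} {μ : Finset (Sym2 (Fin n))} {k : ℕ} (hk : k ≠ 1) :
    cylCntY (pathG n) μ 1 k = 0 := by
  rw [cylCntY]
  convert Nat.zero_div k using 2
  rw [Finset.card_eq_zero, ← Finset.subset_empty]
  intro e he
  simp only [Finset.mem_filter] at he
  exact absurd he.2.2.1 (fun h2 => hk ((eOrbLen_one e) ▸ h2).symm)

lemma mobCntY_one {n : ℕ} {μ : Finset (Sym2 (Fin n))} (k : ℕ) :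
    mobCntY (pathG n) μ 1 k = 0 := by
  rw [mobCntY]
  convert Nat.zero_div k using 2
  rw [Finset.card_eq_zero, ← Finset.subset_empty]
  intro e he
  simp only [Finset.mem_filter] at he
  obtain ⟨hef, -, -, h3⟩ := he
  rw [eFin, SimpleGraph.mem_edgeFinset] at hef
  exact absurd h3 (not_isMobE_of_pow_eq_one (one_pow _) hef)

lemma cylCntZ_one_eq {n : ℕ} {μ : Finset (Sym2 (Fin n))} (hμ : μ ∈ matchings (pathG n)) :
    cylCntZ (pathG n) μ 1 1 = (n - 1) - μ.card := by
  rw [cylCntZ, Nat.div_one]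
  trans (eFin (pathG n) \ μ).card
  · refine congrArg Finset.card ?_
    ext e
    simp only [Finset.mem_filter, Finset.mem_sdiff]
    constructor
    · rintro ⟨he, h1, -⟩; exact ⟨he, h1⟩
    · rintro ⟨he, h1⟩
      exact ⟨he, h1, eOrbLen_one e, isCylE_of_pow_eq_one (one_pow _)⟩
  · rw [Finset.card_sdiff_of_subset (matchings_subset_eFin hμ), card_eFin_pathG]

lemma cylCntZ_one_ne {n : ℕ} {μ : Finset (Sym2 (Fin n))} {k : ℕ} (hk : k ≠ 1) :
    cylCntZ (pathG n) μ 1 k = 0 := by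
  rw [cylCntZ]
  convert Nat.zero_div k using 2
  rw [Finset.card_eq_zero, ← Finset.subset_empty]
  intro e he
  simp only [Finset.mem_filter] at he
  exact absurd he.2.2.1 (fun h2 => hk ((eOrbLen_one e) ▸ h2).symm)

lemma mobCntZ_one {n : ℕ} {μ : Finset (Sym2 (Fin n))} (k : ℕ) :
    mobCntZ (pathG n) μ 1 k = 0 := by
  rw [mobCntZ]
  convert Nat.zero_div k using 2
  rw [Finset.card_eq_zero, ← Finset.subset_empty]
  intro e he
  simp only [Finset.mem_filter] at he
  obtain ⟨hef, -, -, h3⟩ := he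
  rw [eFin, SimpleGraph.mem_edgeFinset] at hef
  exact absurd h3 (not_isMobE_of_pow_eq_one (one_pow _) hef)

lemma wM_one {n : ℕ} {μ : Finset (Sym2 (Fin n))} (hμ : μ ∈ matchings (pathG n)) :
    wM (pathG n) μ 1 = va 1 ^ n * (vb 1 ^ μ.card * vbeta 1 ^ ((n - 1) - μ.card)) := by
  rw [wM]
  have h2 : (1 : ℕ) < Fintype.card (Fin n) * Fintype.card (Fin n) + 2 := by omega
  rw [prod_pow_single va _ _ 1 h2 (fun k hk => vcyc_one_ne hk),
    prod_pow_single vb _ _ 1 h2 (fun k hk => cylCntY_one_ne hk),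
    prod_pow_single vc _ _ 1 h2 (fun k _ => mobCntY_one k),
    prod_pow_single vbeta _ _ 1 h2 (fun k hk => cylCntZ_one_ne hk),
    prod_pow_single vgamma _ _ 1 h2 (fun k _ => mobCntZ_one k),
    vcyc_one_main, cylCntY_one_eq hμ, mobCntY_one, cylCntZ_one_eq hμ, mobCntZ_one,
    Fintype.card_fin]
  ring

lemma sum_wM_one {n : ℕ} :
    ∑ μ ∈ fixedMatchings (pathG n) 1, wM (pathG n) μ 1 =
      va 1 ^ n * Upoly n (vb 1) (vbeta 1) := by
  have hfix : fixedMatchings (pathG n) 1 = matchings (pathG n) := by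
    ext ν
    simp only [fixedMatchings, Finset.mem_filter]
    constructor
    · exact fun h => h.1
    · intro h
      refine ⟨h, ?_⟩
      have hid : Sym2.map (⇑(1 : Equiv.Perm (Fin n))) = id := by
        funext e; induction e using Sym2.ind with | _ x y => simp
      rw [hid]
      simp
  rw [hfix, Upoly, Finset.mul_sum]
  exact Finset.sum_congr rfl (fun μ hμ => wM_one hμ)

end IdentityCase
section RevCase

lemma edgePerm_apply {V : Type*} (σ : Equiv.Perm V) (e : Sym2 V) :
    edgePerm σ e = Sym2.map σ e := rfl

lemma rev_fixed_iff {n m : ℕ} (hn : n = 2 * m + 1) (v : Fin n) :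
    Fin.revPerm v = v ↔ (v : ℕ) = m := by
  rw [Fin.ext_iff, Fin.revPerm_apply, Fin.val_rev]
  have := v.isLt
  omega

lemma vcyc_rev_one {n m : ℕ} (hn : n = 2 * m + 1) :
    vcyc (Fin.revPerm : Equiv.Perm (Fin n)) 1 = 1 := by
  rw [vcyc, Nat.div_one]
  refine Finset.card_eq_one.mpr ⟨⟨m, by omega⟩, ?_⟩
  ext v
  simp only [Finset.mem_filter, Finset.mem_univ, true_and, Finset.mem_singleton]
  rcases eq_or_ne (Fin.revPerm v) v with h | h
  · rw [orbSize_fixed h]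
    simp only [true_iff]
    exact Fin.ext ((rev_fixed_iff hn v).mp h)
  · rw [orbSize_invol_two revPerm_sq h]
    simp only [OfNat.ofNat_ne_one, false_iff]
    intro hv
    exact h ((rev_fixed_iff hn v).mpr (by rw [hv]))

lemma vcyc_rev_two {n m : ℕ} (hn : n = 2 * m + 1) :
    vcyc (Fin.revPerm : Equiv.Perm (Fin n)) 2 = m := by
  rw [vcyc]
  trans ((Finset.univ \ {(⟨m, by omega⟩ : Fin n)}).card / 2)
  · refine congrArg (· / 2) (congrArg Finset.card ?_)
    ext v
    simp only [Finset.mem_filter, Finset.mem_univ, true_and, Finset.mem_sdiff,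
      Finset.mem_singleton]
    rcases eq_or_ne (Fin.revPerm v) v with h | h
    · rw [orbSize_fixed h]
      have hv : v = (⟨m, by omega⟩ : Fin n) := Fin.ext ((rev_fixed_iff hn v).mp h)
      simp [hv]
    · rw [orbSize_invol_two revPerm_sq h]
      have hv : ¬ v = (⟨m, by omega⟩ : Fin n) :=
        fun hv => h ((rev_fixed_iff hn v).mpr (by rw [hv]))
      simp [hv]
  · rw [Finset.card_sdiff_of_subset (by simp), Finset.card_univ, Fintype.card_fin,
      Finset.card_singleton]
    omega

lemma vcyc_rev_ne {n m : ℕ} (hn : n = 2 * m + 1) {k : ℕ} (h1 : k ≠ 1) (h2 : k ≠ 2) :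
    vcyc (Fin.revPerm : Equiv.Perm (Fin n)) k = 0 := by
  rw [vcyc]
  convert Nat.zero_div k using 2
  rw [Finset.card_eq_zero, ← Finset.subset_empty]
  intro v hv
  simp only [Finset.mem_filter] at hv
  rcases eq_or_ne (Fin.revPerm v) v with h | h
  · rw [orbSize_fixed h] at hv
    exact absurd hv.2.symm h1
  · rw [orbSize_invol_two revPerm_sq h] at hv
    exact absurd hv.2.symm h2

lemma edgePerm_rev_ne {n m : ℕ} (hn : n = 2 * m + 1) {e : Sym2 (Fin n)}
    (he : e ∈ (pathG n).edgeSet) : edgePerm (Fin.revPerm : Equiv.Perm (Fin n)) e ≠ e := by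
  obtain ⟨u, v, rfl, huv⟩ := mem_pathG_edgeSet.mp he
  rw [edgePerm_apply, Sym2.map_pair_eq]
  intro h
  rw [Sym2.eq_iff] at h
  have hu := u.isLt
  have hv := v.isLt
  rcases h with ⟨h1, h2⟩ | ⟨h1, h2⟩ <;>
  · have g1 := congrArg Fin.val h1
    have g2 := congrArg Fin.val h2
    simp only [Fin.revPerm_apply, Fin.val_rev] at g1 g2
    omega

lemma eOrbLen_rev {n m : ℕ} (hn : n = 2 * m + 1) {e : Sym2 (Fin n)}
    (he : e ∈ (pathG n).edgeSet) : eOrbLen (Fin.revPerm : Equiv.Perm (Fin n)) e = 2 :=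
  eOrbLen_invol revPerm_sq (edgePerm_rev_ne hn he)

lemma rev_pow_orb {n m : ℕ} (hn : n = 2 * m + 1) {e : Sym2 (Fin n)}
    (he : e ∈ (pathG n).edgeSet) :
    (Fin.revPerm : Equiv.Perm (Fin n)) ^ eOrbLen (Fin.revPerm : Equiv.Perm (Fin n)) e = 1 := by
  rw [eOrbLen_rev hn he]
  exact revPerm_sq

lemma cylCntY_rev_eq {n m : ℕ} (hn : n = 2 * m + 1) {μ : Finset (Sym2 (Fin n))}
    (hμ : μ ∈ matchings (pathG n)) :
    cylCntY (pathG n) μ Fin.revPerm 2 = μ.card / 2 := by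
  rw [cylCntY]
  refine congrArg (· / 2) (congrArg Finset.card ?_)
  ext e
  simp only [Finset.mem_filter, eFin, SimpleGraph.mem_edgeFinset]
  constructor
  · rintro ⟨-, h, -⟩; exact h
  · intro h
    have he := matchings_subset hμ e h
    exact ⟨he, h, eOrbLen_rev hn he, isCylE_of_pow_eq_one (rev_pow_orb hn he)⟩

lemma cylCntY_rev_ne {n m : ℕ} (hn : n = 2 * m + 1) {μ : Finset (Sym2 (Fin n))} {k : ℕ}
    (hk : k ≠ 2) : cylCntY (pathG n) μ Fin.revPerm k = 0 := by
  rw [cylCntY]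
  convert Nat.zero_div k using 2
  rw [Finset.card_eq_zero, ← Finset.subset_empty]
  intro e he
  simp only [Finset.mem_filter, eFin, SimpleGraph.mem_edgeFinset] at he
  exact absurd ((eOrbLen_rev hn he.1) ▸ he.2.2.1).symm hk

lemma mobCntY_rev {n m : ℕ} (hn : n = 2 * m + 1) {μ : Finset (Sym2 (Fin n))} (k : ℕ) :
    mobCntY (pathG n) μ Fin.revPerm k = 0 := by
  rw [mobCntY]
  convert Nat.zero_div k using 2
  rw [Finset.card_eq_zero, ← Finset.subset_empty]
  intro e he
  simp only [Finset.mem_filter, eFin, SimpleGraph.mem_edgeFinset] at he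
  exact absurd he.2.2.2 (not_isMobE_of_pow_eq_one (rev_pow_orb hn he.1) he.1)

lemma cylCntZ_rev_eq {n m : ℕ} (hn : n = 2 * m + 1) {μ : Finset (Sym2 (Fin n))}
    (hμ : μ ∈ matchings (pathG n)) :
    cylCntZ (pathG n) μ Fin.revPerm 2 = ((n - 1) - μ.card) / 2 := by
  rw [cylCntZ]
  trans ((eFin (pathG n) \ μ).card / 2)
  · refine congrArg (· / 2) (congrArg Finset.card ?_)
    ext e
    simp only [Finset.mem_filter, Finset.mem_sdiff]
    constructor
    · rintro ⟨he, h1, -⟩; exact ⟨he, h1⟩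
    · rintro ⟨he, h1⟩
      have he' : e ∈ (pathG n).edgeSet := by rwa [eFin, SimpleGraph.mem_edgeFinset] at he
      exact ⟨he, h1, eOrbLen_rev hn he', isCylE_of_pow_eq_one (rev_pow_orb hn he')⟩
  · rw [Finset.card_sdiff_of_subset (matchings_subset_eFin hμ), card_eFin_pathG]

lemma cylCntZ_rev_ne {n m : ℕ} (hn : n = 2 * m + 1) {μ : Finset (Sym2 (Fin n))} {k : ℕ}
    (hk : k ≠ 2) : cylCntZ (pathG n) μ Fin.revPerm k = 0 := by
  rw [cylCntZ]
  convert Nat.zero_div k using 2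
  rw [Finset.card_eq_zero, ← Finset.subset_empty]
  intro e he
  simp only [Finset.mem_filter, eFin, SimpleGraph.mem_edgeFinset] at he
  exact absurd ((eOrbLen_rev hn he.1) ▸ he.2.2.1).symm hk

lemma mobCntZ_rev {n m : ℕ} (hn : n = 2 * m + 1) {μ : Finset (Sym2 (Fin n))} (k : ℕ) :
    mobCntZ (pathG n) μ Fin.revPerm k = 0 := by
  rw [mobCntZ]
  convert Nat.zero_div k using 2
  rw [Finset.card_eq_zero, ← Finset.subset_empty]
  intro e he
  simp only [Finset.mem_filter, eFin, SimpleGraph.mem_edgeFinset] at he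
  exact absurd he.2.2.2 (not_isMobE_of_pow_eq_one (rev_pow_orb hn he.1) he.1)

lemma wM_rev {n m : ℕ} (hn : n = 2 * m + 1) {μ : Finset (Sym2 (Fin n))}
    (hμ : μ ∈ matchings (pathG n)) :
    wM (pathG n) μ Fin.revPerm =
      va 1 * va 2 ^ m * (vb 2 ^ (μ.card / 2) * vbeta 2 ^ (((n - 1) - μ.card) / 2)) := by
  rw [wM]
  have h1 : (1 : ℕ) < Fintype.card (Fin n) * Fintype.card (Fin n) + 2 := by omega
  have h2 : (2 : ℕ) < Fintype.card (Fin n) * Fintype.card (Fin n) + 2 := by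
    rw [Fintype.card_fin]
    have := Nat.mul_pos (show 0 < n by omega) (show 0 < n by omega)
    omega
  rw [prod_pow_pair va _ _ 1 2 h1 h2 (by omega) (fun k ha hb => vcyc_rev_ne hn ha hb),
    prod_pow_single vb _ _ 2 h2 (fun k hk => cylCntY_rev_ne hn hk),
    prod_pow_single vc _ _ 2 h2 (fun k _ => mobCntY_rev hn k),
    prod_pow_single vbeta _ _ 2 h2 (fun k hk => cylCntZ_rev_ne hn hk),
    prod_pow_single vgamma _ _ 2 h2 (fun k _ => mobCntZ_rev hn k),
    vcyc_rev_one hn, vcyc_rev_two hn, cylCntY_rev_eq hn hμ, mobCntY_rev hn,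
    cylCntZ_rev_eq hn hμ, mobCntZ_rev hn]
  ring

end RevCase
section Bijection

def embV {n m : ℕ} (h : n = 2 * m + 1) (a : Fin m) : Fin n :=
  ⟨(a : ℕ), by have := a.isLt; omega⟩

def PhiM {n m : ℕ} (h : n = 2 * m + 1) (μ : Finset (Sym2 (Fin n))) : Finset (Sym2 (Fin m)) :=
  Finset.univ.filter (fun f => Sym2.map (embV h) f ∈ μ)

def PsiM {n m : ℕ} (h : n = 2 * m + 1) (ν : Finset (Sym2 (Fin m))) : Finset (Sym2 (Fin n)) :=
  ν.image (Sym2.map (embV h)) ∪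
    ν.image (fun f => Sym2.map (⇑(Fin.revPerm : Equiv.Perm (Fin n))) (Sym2.map (embV h) f))

lemma embV_inj {n m : ℕ} (h : n = 2 * m + 1) : Function.Injective (embV h) := by
  intro a b hab
  have h2 := congrArg Fin.val hab
  simp only [embV] at h2
  exact Fin.ext h2

lemma mapEmb_inj {n m : ℕ} (h : n = 2 * m + 1) :
    Function.Injective (Sym2.map (embV h)) := Sym2.map.injective (embV_inj h)

lemma map_rev_rev {n : ℕ} (e : Sym2 (Fin n)) :
    Sym2.map (⇑(Fin.revPerm : Equiv.Perm (Fin n)))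
      (Sym2.map (⇑(Fin.revPerm : Equiv.Perm (Fin n))) e) = e := by
  induction e using Sym2.ind with
  | _ x y => simp [Sym2.map_pair_eq, Fin.rev_rev]

lemma mem_map_emb_lt {n m : ℕ} (h : n = 2 * m + 1) (f : Sym2 (Fin m)) :
    ∀ v ∈ Sym2.map (embV h) f, (v : ℕ) < m := by
  intro v hv
  rw [Sym2.mem_map] at hv
  obtain ⟨a, -, rfl⟩ := hv
  exact a.isLt

lemma mem_map_rev_gt {n m : ℕ} (h : n = 2 * m + 1) (e : Sym2 (Fin n))
    (he : ∀ v ∈ e, (v : ℕ) < m) :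
    ∀ v ∈ Sym2.map (⇑(Fin.revPerm : Equiv.Perm (Fin n))) e, m < (v : ℕ) := by
  intro v hv
  rw [Sym2.mem_map] at hv
  obtain ⟨a, ha, rfl⟩ := hv
  have h1 := he a ha
  have h2 := a.isLt
  simp only [Fin.revPerm_apply, Fin.val_rev]
  omega

lemma mem_map_rev_lt {n m : ℕ} (h : n = 2 * m + 1) (e : Sym2 (Fin n))
    (he : ∀ v ∈ e, m < (v : ℕ)) :
    ∀ v ∈ Sym2.map (⇑(Fin.revPerm : Equiv.Perm (Fin n))) e, (v : ℕ) < m := by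
  intro v hv
  rw [Sym2.mem_map] at hv
  obtain ⟨a, ha, rfl⟩ := hv
  have h1 := he a ha
  have h2 := a.isLt
  simp only [Fin.revPerm_apply, Fin.val_rev]
  omega

lemma fixedM_matching {V : Type*} [Fintype V] {G : SimpleGraph V} {σ : Equiv.Perm V}
    {μ : Finset (Sym2 V)} (hμ : μ ∈ fixedMatchings G σ) : μ ∈ matchings G :=
  (Finset.mem_filter.mp hμ).1

lemma fixed_mem_map {V : Type*} [Fintype V] {G : SimpleGraph V} {σ : Equiv.Perm V}
    {μ : Finset (Sym2 V)} (hμ : μ ∈ fixedMatchings G σ) {e : Sym2 V} (he : e ∈ μ) :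
    Sym2.map (⇑σ) e ∈ μ := by
  have h := (Finset.mem_filter.mp hμ).2
  rw [← h]
  exact Finset.mem_image_of_mem _ he

lemma low_or_high {n m : ℕ} (h : n = 2 * m + 1) {μ : Finset (Sym2 (Fin n))}
    (hμ : μ ∈ fixedMatchings (pathG n) Fin.revPerm) {e : Sym2 (Fin n)} (he : e ∈ μ) :
    (∀ v ∈ e, (v : ℕ) < m) ∨ (∀ v ∈ e, m < (v : ℕ)) := by
  have hmat := fixedM_matching hμ
  have hedge := matchings_subset hmat e he
  obtain ⟨u, v, rfl, huv⟩ := mem_pathG_edgeSet.mp hedge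
  have hvlt := v.isLt
  have hult := u.isLt
  by_cases hv : (v : ℕ) < m
  · left
    intro w hw
    rw [Sym2.mem_iff] at hw
    rcases hw with rfl | rfl <;> omega
  · by_cases hu : m < (u : ℕ)
    · right
      intro w hw
      rw [Sym2.mem_iff] at hw
      rcases hw with rfl | rfl <;> omega
    · exfalso
      have he' : Sym2.map (⇑(Fin.revPerm : Equiv.Perm (Fin n))) s(u, v) ∈ μ :=
        fixed_mem_map hμ he
      rw [Sym2.map_pair_eq] at he'
      have hne : s(Fin.revPerm u, Fin.revPerm v) ≠ s(u, v) := by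
        intro hEq
        rw [Sym2.eq_iff] at hEq
        rcases hEq with ⟨h1, h2⟩ | ⟨h1, h2⟩ <;>
        · have g1 := congrArg Fin.val h1
          have g2 := congrArg Fin.val h2
          simp only [Fin.revPerm_apply, Fin.val_rev] at g1 g2
          omega
      have hm' : m < n := by omega
      have hmem1 : (⟨m, hm'⟩ : Fin n) ∈ s(u, v) := by
        rw [Sym2.mem_iff]
        rcases (by omega : (u : ℕ) = m ∨ (v : ℕ) = m) with hh | hh
        · left; exact Fin.ext hh.symm
        · right; exact Fin.ext hh.symm
      have hmem2 : (⟨m, hm'⟩ : Fin n) ∈ s(Fin.revPerm u, Fin.revPerm v) := by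
        rw [Sym2.mem_iff]
        rcases (by omega : (u : ℕ) = m ∨ (v : ℕ) = m) with hh | hh
        · left
          apply Fin.ext
          simp only [Fin.revPerm_apply, Fin.val_rev]
          omega
        · right
          apply Fin.ext
          simp only [Fin.revPerm_apply, Fin.val_rev]
          omega
      exact matchings_disj hmat _ he' _ he hne ⟨m, hm'⟩ hmem2 hmem1

lemma low_repr {n m : ℕ} (h : n = 2 * m + 1) {e : Sym2 (Fin n)}
    (he : e ∈ (pathG n).edgeSet) (hlow : ∀ v ∈ e, (v : ℕ) < m) :
    ∃ f : Sym2 (Fin m), Sym2.map (embV h) f = e := by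
  obtain ⟨u, v, rfl, huv⟩ := mem_pathG_edgeSet.mp he
  have hu : (u : ℕ) < m := hlow u (Sym2.mem_iff.mpr (Or.inl rfl))
  have hv : (v : ℕ) < m := hlow v (Sym2.mem_iff.mpr (Or.inr rfl))
  refine ⟨s(⟨(u : ℕ), hu⟩, ⟨(v : ℕ), hv⟩), ?_⟩
  rw [Sym2.map_pair_eq]
  exact Sym2.eq_iff.mpr (Or.inl ⟨Fin.ext rfl, Fin.ext rfl⟩)

lemma map_emb_edge {n m : ℕ} (h : n = 2 * m + 1) {f : Sym2 (Fin m)}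
    (hf : f ∈ (pathG m).edgeSet) : Sym2.map (embV h) f ∈ (pathG n).edgeSet := by
  obtain ⟨a, b, rfl, hab⟩ := mem_pathG_edgeSet.mp hf
  rw [Sym2.map_pair_eq]
  exact mem_pathG_edgeSet.mpr ⟨_, _, rfl, hab⟩

lemma map_emb_edge_rev {n m : ℕ} (h : n = 2 * m + 1) {f : Sym2 (Fin m)}
    (hf : Sym2.map (embV h) f ∈ (pathG n).edgeSet) : f ∈ (pathG m).edgeSet := by
  induction f using Sym2.ind with
  | _ a b =>
    rw [Sym2.map_pair_eq, SimpleGraph.mem_edgeSet, pathG_adj] at hf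
    rw [SimpleGraph.mem_edgeSet, pathG_adj]
    exact hf

lemma map_rev_edge {n m : ℕ} (h : n = 2 * m + 1) {e : Sym2 (Fin n)}
    (he : e ∈ (pathG n).edgeSet) :
    Sym2.map (⇑(Fin.revPerm : Equiv.Perm (Fin n))) e ∈ (pathG n).edgeSet := by
  obtain ⟨u, v, rfl, huv⟩ := mem_pathG_edgeSet.mp he
  have hu := u.isLt
  have hv := v.isLt
  rw [Sym2.map_pair_eq, SimpleGraph.mem_edgeSet, pathG_adj]
  simp only [Fin.revPerm_apply, Fin.val_rev]
  omega

lemma card_phiM {n m : ℕ} (h : n = 2 * m + 1) {μ : Finset (Sym2 (Fin n))}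
    (hμ : μ ∈ fixedMatchings (pathG n) Fin.revPerm) :
    μ.card = 2 * (PhiM h μ).card := by
  classical
  have hsplit := Finset.card_filter_add_card_filter_not
    (s := μ) (p := fun e => ∀ v : Fin n, v ∈ e → (v : ℕ) < m)
  have hhl : (μ.filter (fun e => ¬ ∀ v : Fin n, v ∈ e → (v : ℕ) < m)).card =
      (μ.filter (fun e => ∀ v : Fin n, v ∈ e → (v : ℕ) < m)).card := by
    apply Finset.card_bij (fun e _ => Sym2.map (⇑(Fin.revPerm : Equiv.Perm (Fin n))) e)
    · intro e he
      simp only [Finset.mem_filter] at he ⊢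
      have hhigh : ∀ v ∈ e, m < (v : ℕ) := (low_or_high h hμ he.1).resolve_left he.2
      exact ⟨fixed_mem_map hμ he.1, mem_map_rev_lt h e hhigh⟩
    · intro a ha b hb hab
      have := congrArg (Sym2.map (⇑(Fin.revPerm : Equiv.Perm (Fin n)))) hab
      rwa [map_rev_rev, map_rev_rev] at this
    · intro e he
      simp only [Finset.mem_filter] at he
      obtain ⟨u, v, rfl, huv⟩ :=
        mem_pathG_edgeSet.mp (matchings_subset (fixedM_matching hμ) e he.1)
      refine ⟨Sym2.map (⇑(Fin.revPerm : Equiv.Perm (Fin n))) s(u, v), ?_, map_rev_rev _⟩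
      simp only [Finset.mem_filter]
      refine ⟨fixed_mem_map hμ he.1, ?_⟩
      intro hcon
      have hgt := mem_map_rev_gt h s(u, v) he.2
      have h1 := hgt (Fin.revPerm u) (Sym2.mem_map.mpr ⟨u, Sym2.mem_iff.mpr (Or.inl rfl), rfl⟩)
      have h2 := hcon (Fin.revPerm u) (Sym2.mem_map.mpr ⟨u, Sym2.mem_iff.mpr (Or.inl rfl), rfl⟩)
      omega
  have hphi : (PhiM h μ).card =
      (μ.filter (fun e => ∀ v : Fin n, v ∈ e → (v : ℕ) < m)).card := by
    apply Finset.card_bij (fun f _ => Sym2.map (embV h) f)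
    · intro f hf
      simp only [PhiM, Finset.mem_filter, Finset.mem_univ, true_and] at hf
      simp only [Finset.mem_filter]
      exact ⟨hf, mem_map_emb_lt h f⟩
    · intro a ha b hb hab
      exact mapEmb_inj h hab
    · intro e he
      simp only [Finset.mem_filter] at he
      obtain ⟨f, hfe⟩ := low_repr h (matchings_subset (fixedM_matching hμ) e he.1) he.2
      refine ⟨f, ?_, hfe⟩
      simp only [PhiM, Finset.mem_filter, Finset.mem_univ, true_and]
      rw [hfe]
      exact he.1
  omega

lemma phiM_matching {n m : ℕ} (h : n = 2 * m + 1) {μ : Finset (Sym2 (Fin n))}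
    (hμ : μ ∈ fixedMatchings (pathG n) Fin.revPerm) : PhiM h μ ∈ matchings (pathG m) := by
  rw [mem_matchings]
  constructor
  · intro f hf
    simp only [PhiM, Finset.mem_filter, Finset.mem_univ, true_and] at hf
    exact map_emb_edge_rev h (matchings_subset (fixedM_matching hμ) _ hf)
  · intro f hf f' hf' hne a haf haf'
    simp only [PhiM, Finset.mem_filter, Finset.mem_univ, true_and] at hf hf'
    have hne' : Sym2.map (embV h) f ≠ Sym2.map (embV h) f' :=
      fun hh => hne (mapEmb_inj h hh)
    exact matchings_disj (fixedM_matching hμ) _ hf _ hf' hne' (embV h a)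
      (Sym2.mem_map.mpr ⟨a, haf, rfl⟩) (Sym2.mem_map.mpr ⟨a, haf', rfl⟩)

lemma psiM_mem {n m : ℕ} (h : n = 2 * m + 1) {ν : Finset (Sym2 (Fin m))}
    (hν : ν ∈ matchings (pathG m)) :
    PsiM h ν ∈ fixedMatchings (pathG n) Fin.revPerm := by
  simp only [fixedMatchings, Finset.mem_filter]
  constructor
  · rw [mem_matchings]
    constructor
    · intro e he
      simp only [PsiM, Finset.mem_union] at he
      rcases he with he | he <;> rw [Finset.mem_image] at he <;> obtain ⟨f, hf, rfl⟩ := he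
      · exact map_emb_edge h (matchings_subset hν f hf)
      · exact map_rev_edge h (map_emb_edge h (matchings_subset hν f hf))
    · intro e he e' he' hne a hae hae'
      simp only [PsiM, Finset.mem_union] at he he'
      rcases he with he | he <;> rcases he' with he' | he' <;>
        rw [Finset.mem_image] at he he' <;>
        obtain ⟨f, hf, rfl⟩ := he <;> obtain ⟨f', hf', rfl⟩ := he'
      · -- low / low
        obtain ⟨x, hx, hxa⟩ := Sym2.mem_map.mp hae
        obtain ⟨x', hx', hx'a⟩ := Sym2.mem_map.mp hae'
        have hxx : x = x' := embV_inj h (hxa.trans hx'a.symm)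
        subst hxx
        exact matchings_disj hν f hf f' hf' (fun hh => hne (by rw [hh])) x hx hx'
      · -- low / high
        have h1 := mem_map_emb_lt h f a hae
        have h2 := mem_map_rev_gt h _ (mem_map_emb_lt h f') a hae'
        omega
      · -- high / low
        have h1 := mem_map_emb_lt h f' a hae'
        have h2 := mem_map_rev_gt h _ (mem_map_emb_lt h f) a hae
        omega
      · -- high / high
        obtain ⟨w, hw, hwa⟩ := Sym2.mem_map.mp hae
        obtain ⟨w', hw', hw'a⟩ := Sym2.mem_map.mp hae'
        have hww : w = w' := Fin.revPerm.injective (hwa.trans hw'a.symm)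
        subst hww
        obtain ⟨x, hx, hxw⟩ := Sym2.mem_map.mp hw
        obtain ⟨x', hx', hx'w⟩ := Sym2.mem_map.mp hw'
        have hxx : x = x' := embV_inj h (hxw.trans hx'w.symm)
        subst hxx
        have hff : f ≠ f' := fun hh => hne (by rw [hh])
        exact matchings_disj hν f hf f' hf' hff x hx hx'
  · ext e
    simp only [PsiM, Finset.mem_image, Finset.mem_union]
    constructor
    · rintro ⟨a, (⟨f, hf, rfl⟩ | ⟨f, hf, rfl⟩), rfl⟩
      · exact Or.inr ⟨f, hf, rfl⟩
      · exact Or.inl ⟨f, hf, (map_rev_rev _).symm⟩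
    · rintro (⟨f, hf, rfl⟩ | ⟨f, hf, rfl⟩)
      · exact ⟨Sym2.map (⇑(Fin.revPerm : Equiv.Perm (Fin n))) (Sym2.map (embV h) f),
          Or.inr ⟨f, hf, rfl⟩, map_rev_rev _⟩
      · exact ⟨Sym2.map (embV h) f, Or.inl ⟨f, hf, rfl⟩, rfl⟩

lemma psiM_phiM {n m : ℕ} (h : n = 2 * m + 1) {μ : Finset (Sym2 (Fin n))}
    (hμ : μ ∈ fixedMatchings (pathG n) Fin.revPerm) : PsiM h (PhiM h μ) = μ := by
  ext e
  simp only [PsiM, PhiM, Finset.mem_union, Finset.mem_image, Finset.mem_filter,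
    Finset.mem_univ, true_and]
  constructor
  · rintro (⟨f, hf, rfl⟩ | ⟨f, hf, rfl⟩)
    · exact hf
    · exact fixed_mem_map hμ hf
  · intro he
    rcases low_or_high h hμ he with hlow | hhigh
    · left
      obtain ⟨f, rfl⟩ := low_repr h (matchings_subset (fixedM_matching hμ) e he) hlow
      exact ⟨f, he, rfl⟩
    · right
      have he2 : Sym2.map (⇑(Fin.revPerm : Equiv.Perm (Fin n))) e ∈ μ := fixed_mem_map hμ he
      have hlow2 := mem_map_rev_lt h e hhigh
      obtain ⟨f, hfe⟩ := low_repr h (matchings_subset (fixedM_matching hμ) _ he2) hlow2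
      refine ⟨f, ?_, ?_⟩
      · rw [hfe]; exact he2
      · rw [hfe]; exact map_rev_rev e

lemma phiM_psiM {n m : ℕ} (h : n = 2 * m + 1) {ν : Finset (Sym2 (Fin m))}
    (hν : ν ∈ matchings (pathG m)) : PhiM h (PsiM h ν) = ν := by
  ext f
  simp only [PhiM, PsiM, Finset.mem_filter, Finset.mem_univ, true_and, Finset.mem_union,
    Finset.mem_image]
  constructor
  · rintro (⟨f', hf', heq⟩ | ⟨f', hf', heq⟩)
    · have := mapEmb_inj h heq
      rwa [← this]
    · exfalso
      have hvex : ∃ v, v ∈ Sym2.map (embV h) f := by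
        induction f using Sym2.ind with
        | _ x y => exact ⟨embV h x, Sym2.mem_map.mpr ⟨x, Sym2.mem_iff.mpr (Or.inl rfl), rfl⟩⟩
      obtain ⟨v, hv⟩ := hvex
      have h1 : (v : ℕ) < m := mem_map_emb_lt h f v hv
      have h2 : m < (v : ℕ) := by
        rw [← heq] at hv
        exact mem_map_rev_gt h _ (mem_map_emb_lt h f') v hv
      omega
  · intro hf
    exact Or.inl ⟨f, hf, rfl⟩

lemma phiM_card_le {n m : ℕ} (h : n = 2 * m + 1) {μ : Finset (Sym2 (Fin n))}
    (hμ : μ ∈ fixedMatchings (pathG n) Fin.revPerm) : (PhiM h μ).card ≤ m - 1 := by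
  have := Finset.card_le_card (matchings_subset_eFin (phiM_matching h hμ))
  rwa [card_eFin_pathG] at this

lemma sum_wM_rev {n m : ℕ} (h : n = 2 * m + 1) (hm : 1 ≤ m) :
    ∑ μ ∈ fixedMatchings (pathG n) Fin.revPerm, wM (pathG n) μ Fin.revPerm =
      va 1 * va 2 ^ m * vbeta 2 * Upoly m (vb 2) (vbeta 2) := by
  rw [Upoly, Finset.mul_sum]
  refine Finset.sum_bij' (fun μ _ => PhiM h μ) (fun ν _ => PsiM h ν)
    (fun μ hμ => phiM_matching h hμ) (fun ν hν => psiM_mem h hν)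
    (fun μ hμ => psiM_phiM h hμ) (fun ν hν => phiM_psiM h hν) ?_
  intro μ hμ
  have hc := card_phiM h hμ
  have hle := phiM_card_le h hμ
  rw [wM_rev h (fixedM_matching hμ), hc]
  have e1 : 2 * (PhiM h μ).card / 2 = (PhiM h μ).card := by omega
  have e2 : ((n - 1) - 2 * (PhiM h μ).card) / 2 = (m - 1 - (PhiM h μ).card) + 1 := by omega
  rw [e1, e2, pow_succ]
  ring

end Bijection
/-- the extended Walsh series of matched paths `P_n`, `n` odd, `n ≥ 3`. -/
theorem walsh_matched_path_odd (n : ℕ) (hn : 3 ≤ n) (hodd : Odd n) :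
    ∑ σ ∈ autF (pathG n), ∑ μ ∈ fixedMatchings (pathG n) σ, wM (pathG n) μ σ =
      va 1 ^ n * Upoly n (vb 1) (vbeta 1) +
        va 1 * va 2 ^ ((n - 1) / 2) * vbeta 2 *
          Upoly ((n - 1) / 2) (vb 2) (vbeta 2) := by
  obtain ⟨m, hm⟩ := hodd
  have hm' : n = 2 * m + 1 := by omega
  have hm1 : 1 ≤ m := by omega
  have hdiv : (n - 1) / 2 = m := by omega
  rw [autF_pathG_eq (by omega), Finset.sum_pair (one_ne_revPerm (by omega)),
    sum_wM_one, sum_wM_rev hm' hm1, hdiv]
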